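/- arXiv:1702.02809 — 6 statements merged into one kernel-verified Lean document; each statement's English description precedes it below -/
import Mathlib

section
/- Let f be a non-decreasing submodular set function on subsets of a finite set S with f(∅) = 0, let k ≥ 1, and let Q_0 = ∅, Q_1, …, Q_k be a greedy sequence for f of length k. Then for every subset Q* ⊆ S with |Q*| ≤ k, f(Q_k) ≥ (1 − (1 − 1/k)^k) · f(Q*). -/
open Finset

/-- A greedy sequence of length `k` for a set function `f` on subsets of a finite type `S`:
`Q 0 = ∅` and at each step `θ` (for `1 ≤ θ ≤ k`), `Q θ` is obtained from `Q (θ-1)` by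
inserting a new element `s_θ ∈ S \ Q (θ-1)`, chosen so that no other single insertion
gives a larger value of `f`. -/
def IsGreedySeq {S : Type*} [DecidableEq S] (f : Finset S → ℝ)
    (Q : ℕ → Finset S) (k : ℕ) : Prop :=
  Q 0 = ∅ ∧ ∀ θ, 1 ≤ θ → θ ≤ k →
    (∃ s, s ∉ Q (θ - 1) ∧ Q θ = insert s (Q (θ - 1))) ∧
    ∀ s : S, f (insert s (Q (θ - 1))) ≤ f (Q θ)

lemma marg_aux {S : Type*} [DecidableEq S] (f : Finset S → ℝ)
    (hmono : ∀ Q R : Finset S, Q ⊆ R → f Q ≤ f R)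
    (hsub : ∀ Q R : Finset S, f (Q ∪ R) + f (Q ∩ R) ≤ f Q + f R)
    (A X : Finset S) (hAX : A ⊆ X) (t : S) :
    f (insert t X) + f A ≤ f (insert t A) + f X := by
  have h1 := hsub (insert t A) X
  have h2 : insert t A ∪ X = insert t X := by
    rw [Finset.insert_union, Finset.union_eq_right.mpr hAX]
  have h3 : A ⊆ insert t A ∩ X := Finset.subset_inter (Finset.subset_insert _ _) hAX
  have h4 := hmono _ _ h3
  rw [h2] at h1
  linarith

lemma sum_aux {S : Type*} [DecidableEq S] (f : Finset S → ℝ)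
    (hmono : ∀ Q R : Finset S, Q ⊆ R → f Q ≤ f R)
    (hsub : ∀ Q R : Finset S, f (Q ∪ R) + f (Q ∩ R) ≤ f Q + f R)
    (T A : Finset S) :
    f (A ∪ T) ≤ f A + ∑ s ∈ T, (f (insert s A) - f A) := by
  induction T using Finset.induction_on with
  | empty => simp
  | @insert t T ht ih =>
    have h1 : A ∪ insert t T = insert t (A ∪ T) := by
      rw [Finset.union_insert]
    have h2 := marg_aux f hmono hsub A (A ∪ T) Finset.subset_union_left t
    rw [h1, Finset.sum_insert ht]
    linarith

/-- greedy achieves a `1 − (1 − 1/k)^k` approximation for maximizing a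
non-decreasing submodular set function `f` with `f(∅) = 0` under a cardinality constraint. -/
theorem greedy_approx_bound {S : Type*} [Fintype S] [DecidableEq S]
    (f : Finset S → ℝ)
    (hmono : ∀ Q R : Finset S, Q ⊆ R → f Q ≤ f R)
    (hsub : ∀ Q R : Finset S, f (Q ∪ R) + f (Q ∩ R) ≤ f Q + f R)
    (hempty : f ∅ = 0)
    (k : ℕ) (hk : 1 ≤ k)
    (Q : ℕ → Finset S) (hgreedy : IsGreedySeq f Q k)
    (Qstar : Finset S) (hcard : Qstar.card ≤ k) :
    (1 - (1 - 1 / (k : ℝ)) ^ k) * f Qstar ≤ f (Q k) := by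
  obtain ⟨h0, hstep⟩ := hgreedy
  have hkpos : (0 : ℝ) < k := by exact_mod_cast Nat.lt_of_lt_of_le Nat.zero_lt_one hk
  have hfac0 : (0 : ℝ) ≤ 1 - 1 / k := by
    rw [sub_nonneg, div_le_one hkpos]
    exact_mod_cast hk
  have key : ∀ θ, θ ≤ k → f Qstar - f (Q θ) ≤ (1 - 1 / (k : ℝ)) ^ θ * f Qstar := by
    intro θ
    induction θ with
    | zero => intro _; rw [h0, hempty, pow_zero, one_mul]; linarith
    | succ n ih =>
      intro hnk
      have hn : n ≤ k := Nat.le_of_succ_le hnk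
      obtain ⟨⟨s, hs, hQ⟩, hbest⟩ := hstep (n + 1) (Nat.le_add_left 1 n) hnk
      simp only [Nat.add_sub_cancel] at hQ hbest
      -- f Qstar ≤ f (Q n) + k * (f (Q (n+1)) - f (Q n))
      have h1 : f Qstar ≤ f (Q n ∪ Qstar) :=
        hmono _ _ Finset.subset_union_right
      have h2 := sum_aux f hmono hsub Qstar (Q n)
      have h3 : ∑ s ∈ Qstar, (f (insert s (Q n)) - f (Q n)) ≤
          ∑ _s ∈ Qstar, (f (Q (n + 1)) - f (Q n)) := by
        apply Finset.sum_le_sum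
        intro i _
        have := hbest i
        linarith
      have hgain : 0 ≤ f (Q (n + 1)) - f (Q n) := by
        have : f (Q n) ≤ f (Q (n + 1)) := by
          rw [hQ]; exact hmono _ _ (Finset.subset_insert _ _)
        linarith
      have h4 : ∑ _s ∈ Qstar, (f (Q (n + 1)) - f (Q n)) ≤
          (k : ℝ) * (f (Q (n + 1)) - f (Q n)) := by
        rw [Finset.sum_const, nsmul_eq_mul]
        apply mul_le_mul_of_nonneg_right _ hgain
        exact_mod_cast hcard
      have h5 : f Qstar ≤ f (Q n) + (k : ℝ) * (f (Q (n + 1)) - f (Q n)) := by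
        linarith
      -- recurrence
      have h6 : f Qstar - f (Q (n + 1)) ≤ (1 - 1 / (k : ℝ)) * (f Qstar - f (Q n)) := by
        have hk' : (1 / (k : ℝ)) * (f Qstar - f (Q n)) ≤ f (Q (n + 1)) - f (Q n) := by
          rw [div_mul_eq_mul_div, one_mul, div_le_iff₀ hkpos]
          linarith [mul_comm (f (Q (n + 1)) - f (Q n)) (k : ℝ)]
        nlinarith
      have h7 := ih hn
      calc f Qstar - f (Q (n + 1)) ≤ (1 - 1 / (k : ℝ)) * (f Qstar - f (Q n)) := h6
        _ ≤ (1 - 1 / (k : ℝ)) * ((1 - 1 / (k : ℝ)) ^ n * f Qstar) :=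
            mul_le_mul_of_nonneg_left h7 hfac0
        _ = (1 - 1 / (k : ℝ)) ^ (n + 1) * f Qstar := by ring
  have := key k le_rfl
  linarith
end

section
/- Let f be a non-decreasing submodular set function on subsets of a finite set S with |S| = n, and let Q_0 = ∅, Q_1, …, Q_n = S be a greedy sequence for f of length n. Then for every θ with 1 ≤ θ ≤ n, the marginal gain at step θ satisfies f(Q_θ) − f(Q_{θ−1}) ≥ (f(S) − f(Q_{θ−1})) / (n − θ + 1). -/
open Finset

lemma submodular_sum_bound {S : Type*} [DecidableEq S] (f : Finset S → ℝ)
    (hmono : ∀ Q R : Finset S, Q ⊆ R → f Q ≤ f R)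
    (hsub : ∀ Q R : Finset S, f (Q ∪ R) + f (Q ∩ R) ≤ f Q + f R)
    (A : Finset S) (T : Finset S) :
    f (A ∪ T) - f A ≤ ∑ s ∈ T, (f (insert s A) - f A) := by
  induction T using Finset.induction with
  | empty => simp
  | @insert a T' ha ih =>
    rw [Finset.sum_insert ha]
    have hsub' := hsub (A ∪ T') (insert a A)
    have h1 : (A ∪ T') ∪ insert a A = A ∪ insert a T' := by
      ext x; simp; tauto
    have h2 : A ⊆ (A ∪ T') ∩ insert a A := by
      intro x hx; simp [hx]
    have h3 : f A ≤ f ((A ∪ T') ∩ insert a A) := hmono _ _ h2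
    rw [h1] at hsub'
    linarith

/-- along a full greedy sequence (of length `n = |S|`, exhausting `S`) for a
non-decreasing submodular set function, the marginal gain at step `θ` is at least
`(f(S) − f(Q_{θ−1})) / (n − θ + 1)`. -/
theorem greedy_marginal_gain_lower_bound {S : Type*} [Fintype S] [DecidableEq S]
    (f : Finset S → ℝ)
    (hmono : ∀ Q R : Finset S, Q ⊆ R → f Q ≤ f R)
    (hsub : ∀ Q R : Finset S, f (Q ∪ R) + f (Q ∩ R) ≤ f Q + f R)
    (n : ℕ) (hn : Fintype.card S = n)
    (Q : ℕ → Finset S) (hgreedy : IsGreedySeq f Q n) (hQn : Q n = Finset.univ)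
    (θ : ℕ) (hθ1 : 1 ≤ θ) (hθn : θ ≤ n) :
    (f Finset.univ - f (Q (θ - 1))) / ((n : ℝ) - (θ : ℝ) + 1) ≤
      f (Q θ) - f (Q (θ - 1)) := by
  obtain ⟨h0, hstep⟩ := hgreedy
  -- cardinality of Q j
  have hcard : ∀ j, j ≤ n → (Q j).card = j := by
    intro j
    induction j with
    | zero => intro _; simp [h0]
    | succ m ihm =>
      intro hm
      obtain ⟨⟨s, hs, hQ⟩, _⟩ := hstep (m + 1) (by omega) hm
      simp only [Nat.add_sub_cancel] at hQ hs
      rw [hQ, Finset.card_insert_of_notMem hs, ihm (by omega)]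
  set A := Q (θ - 1) with hA
  have hcardA : A.card = θ - 1 := hcard (θ - 1) (by omega)
  obtain ⟨⟨s₀, hs₀, hQθ⟩, hgr⟩ := hstep θ hθ1 hθn
  have hgain : 0 ≤ f (Q θ) - f A := by
    have : A ⊆ Q θ := by rw [hQθ]; exact Finset.subset_insert _ _
    linarith [hmono A (Q θ) this]
  set T := Finset.univ \ A with hT
  have hAT : A ∪ T = Finset.univ := by
    ext x; simp [hT]
  have hcardT : T.card = n - θ + 1 := by
    rw [hT, Finset.card_sdiff_of_subset (Finset.subset_univ A), Finset.card_univ, hn, hcardA]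
    omega
  have hsum := submodular_sum_bound f hmono hsub A T
  rw [hAT] at hsum
  have hbound : ∑ s ∈ T, (f (insert s A) - f A) ≤ T.card * (f (Q θ) - f A) := by
    have := Finset.sum_le_card_nsmul T (fun s => f (insert s A) - f A)
      (f (Q θ) - f A) (fun s _ => by have h := hgr s; rw [← hA] at h; show f (insert s A) - f A ≤ f (Q θ) - f A; linarith)
    simpa [nsmul_eq_mul] using this
  have hcast : (T.card : ℝ) = (n : ℝ) - (θ : ℝ) + 1 := by
    rw [hcardT]
    have : (↑(n - θ + 1) : ℝ) = (↑(n - θ) : ℝ) + 1 := by push_cast; ring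
    rw [this, Nat.cast_sub hθn]
  have hpos : (0 : ℝ) < (n : ℝ) - (θ : ℝ) + 1 := by
    rw [← hcast]; rw [hcardT]; positivity
  rw [div_le_iff₀ hpos]
  rw [← hcast] at *
  nlinarith
end

section
/- Let f be a non-decreasing submodular set function on subsets of a finite set S with |S| = n and f(∅) = 0, and let Q_0 = ∅, Q_1, …, Q_n = S be a greedy sequence for f of length n. Then for every θ with 1 ≤ θ ≤ n, f(Q_θ) ≥ (θ/n) · f(S). -/
open Finset

/-- along a full greedy sequence (of length `n = |S|`, exhausting `S`) for a
non-decreasing submodular set function with `f(∅) = 0`, `f(Q_θ) ≥ (θ/n) · f(S)`. -/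
theorem greedy_prefix_lower_bound {S : Type*} [Fintype S] [DecidableEq S]
    (f : Finset S → ℝ)
    (hmono : ∀ Q R : Finset S, Q ⊆ R → f Q ≤ f R)
    (hsub : ∀ Q R : Finset S, f (Q ∪ R) + f (Q ∩ R) ≤ f Q + f R)
    (hempty : f ∅ = 0)
    (n : ℕ) (hn : Fintype.card S = n)
    (Q : ℕ → Finset S) (hgreedy : IsGreedySeq f Q n) (hQn : Q n = Finset.univ)
    (θ : ℕ) (hθ1 : 1 ≤ θ) (hθn : θ ≤ n) :
    ((θ : ℝ) / (n : ℝ)) * f Finset.univ ≤ f (Q θ) := by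
  obtain ⟨hQ0, hstep'⟩ := hgreedy
  -- reindexed greedy step
  have hstep : ∀ i, i < n →
      (∃ s, s ∉ Q i ∧ Q (i + 1) = insert s (Q i)) ∧
      ∀ s : S, f (insert s (Q i)) ≤ f (Q (i + 1)) := by
    intro i hi
    have := hstep' (i + 1) (by omega) (by omega)
    simpa using this
  set δ : ℕ → ℝ := fun i => f (Q (i + 1)) - f (Q i) with hδ
  -- consecutive decrease
  have hdec : ∀ i, i + 1 < n → δ (i + 1) ≤ δ i := by
    intro i hi
    obtain ⟨⟨s, hs, hQs⟩, _⟩ := hstep (i + 1) hi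
    obtain ⟨⟨s', hs', hQs'⟩, hgr⟩ := hstep i (by omega)
    have hsubQ : Q i ⊆ Q (i + 1) := by rw [hQs']; exact Finset.subset_insert _ _
    have hunion : Q (i + 1) ∪ insert s (Q i) = Q (i + 2) := by
      rw [hQs]
      ext x
      simp only [Finset.mem_union, Finset.mem_insert]
      constructor
      · rintro (h | rfl | h)
        · exact Or.inr h
        · exact Or.inl rfl
        · exact Or.inr (hsubQ h)
      · rintro (rfl | h)
        · exact Or.inr (Or.inl rfl)
        · exact Or.inl h
    have hinter : Q (i + 1) ∩ insert s (Q i) = Q i := by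
      ext x
      simp only [Finset.mem_inter, Finset.mem_insert]
      constructor
      · rintro ⟨h1, rfl | h2⟩
        · exact absurd h1 hs
        · exact h2
      · intro h; exact ⟨hsubQ h, Or.inr h⟩
    have h1 := hsub (Q (i + 1)) (insert s (Q i))
    rw [hunion, hinter] at h1
    have h2 := hgr s
    simp only [hδ]
    have : Q (i + 1 + 1) = Q (i + 2) := by norm_num
    rw [this]
    linarith
  -- general decrease
  have hdec' : ∀ a b, a ≤ b → b < n → δ b ≤ δ a := by
    intro a b hab hb
    induction b with
    | zero => simp_all
    | succ m ih =>
      rcases Nat.eq_or_lt_of_le hab with rfl | h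
      · exact le_refl _
      · exact (hdec m hb).trans (ih (by omega) (by omega))
  -- telescoping sums
  have htel : ∀ m, ∑ i ∈ Finset.range m, δ i = f (Q m) := by
    intro m
    have := Finset.sum_range_sub (fun i => f (Q i)) m
    simpa [hδ, hQ0, hempty] using this
  have hn0 : (0 : ℝ) < (n : ℝ) := by
    have : 0 < n := by omega
    exact_mod_cast this
  have hd : δ (θ - 1) = δ (θ - 1) := rfl
  -- S1 ≥ θ * δ (θ-1)
  have hS1 : (θ : ℝ) * δ (θ - 1) ≤ ∑ i ∈ Finset.range θ, δ i := by
    have : ∀ i ∈ Finset.range θ, δ (θ - 1) ≤ δ i := by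
      intro i hi
      rw [Finset.mem_range] at hi
      exact hdec' i (θ - 1) (by omega) (by omega)
    calc (θ : ℝ) * δ (θ - 1) = ∑ _i ∈ Finset.range θ, δ (θ - 1) := by
          simp [mul_comm]
      _ ≤ ∑ i ∈ Finset.range θ, δ i := Finset.sum_le_sum this
  -- S2 ≤ (n - θ) * δ (θ-1)
  have hS2 : ∑ i ∈ Finset.Ico θ n, δ i ≤ ((n : ℝ) - θ) * δ (θ - 1) := by
    have hb : ∀ i ∈ Finset.Ico θ n, δ i ≤ δ (θ - 1) := by
      intro i hi
      rw [Finset.mem_Ico] at hi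
      exact hdec' (θ - 1) i (by omega) hi.2
    calc ∑ i ∈ Finset.Ico θ n, δ i ≤ ∑ _i ∈ Finset.Ico θ n, δ (θ - 1) :=
          Finset.sum_le_sum hb
      _ = ((n : ℝ) - θ) * δ (θ - 1) := by
          rw [Finset.sum_const, Nat.card_Ico]
          have : ((n - θ : ℕ) : ℝ) = (n : ℝ) - θ := by
            push_cast [Nat.cast_sub hθn]; ring
          rw [nsmul_eq_mul, this]
  have hsplit : f Finset.univ = (∑ i ∈ Finset.range θ, δ i) + ∑ i ∈ Finset.Ico θ n, δ i := by
    rw [← hQn, ← htel n, ← Finset.sum_range_add_sum_Ico _ hθn]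
  rw [← htel θ, hsplit, div_mul_eq_mul_div, div_le_iff₀ hn0]
  set S1 := ∑ i ∈ Finset.range θ, δ i
  set S2 := ∑ i ∈ Finset.Ico θ n, δ i
  have hθr : (1 : ℝ) ≤ (θ : ℝ) := by exact_mod_cast hθ1
  have hθnr : (θ : ℝ) ≤ (n : ℝ) := by exact_mod_cast hθn
  nlinarith [mul_nonneg (sub_nonneg.mpr hθnr) (sub_nonneg.mpr hθnr)]
end

section
/- Let |S| = n, let k ≤ n, and let Q_0 = ∅, Q_1, …, Q_k be a greedy sequence for the total utility U of length k (part of a greedy sequence that, continued for n steps, exhausts S). Then U(Q_k) ≥ (k/n) · U(S). -/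
open Finset

/-- Utility of a single trajectory with preference function `ψ` over a set of sites `Q`:
the maximum preference score over `Q`, with value `0` on the empty set. -/
noncomputable def trajU {S : Type*} (ψ : S → ℝ) (Q : Finset S) : ℝ :=
  if h : Q.Nonempty then Q.sup' h ψ else 0

/-- Total utility: sum of the per-trajectory utilities over all trajectories. -/
noncomputable def totalU {T S : Type*} [Fintype T] (ψ : T → S → ℝ) (Q : Finset S) : ℝ :=
  ∑ j, trajU (ψ j) Q

lemma trajU_empty {S : Type*} (ψ : S → ℝ) : trajU ψ ∅ = 0 := by simp [trajU]

lemma trajU_mono {S : Type*} (ψ : S → ℝ) (hψ : ∀ s, 0 ≤ ψ s) {A B : Finset S}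
    (h : A ⊆ B) : trajU ψ A ≤ trajU ψ B := by
  unfold trajU
  split_ifs with hA hB hB
  · exact Finset.sup'_le hA ψ fun b hb => Finset.le_sup' ψ (h hb)
  · exact absurd (hA.mono h) hB
  · obtain ⟨b, hb⟩ := hB
    exact le_trans (hψ b) (Finset.le_sup' ψ hb)
  · exact le_refl 0

lemma trajU_insert {S : Type*} [DecidableEq S] (ψ : S → ℝ) {s : S} (hs : 0 ≤ ψ s)
    (A : Finset S) : trajU ψ (insert s A) = max (ψ s) (trajU ψ A) := by
  rcases A.eq_empty_or_nonempty with rfl | hA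
  · simp [trajU, max_eq_left hs]
  · rw [trajU, trajU, dif_pos (Finset.insert_nonempty s A), dif_pos hA,
      Finset.sup'_insert]

lemma trajU_submod {S : Type*} [DecidableEq S] (ψ : S → ℝ) (hψ : ∀ s, 0 ≤ ψ s)
    {A B : Finset S} (hAB : A ⊆ B) (s : S) :
    trajU ψ (insert s B) - trajU ψ B ≤ trajU ψ (insert s A) - trajU ψ A := by
  rw [trajU_insert ψ (hψ s), trajU_insert ψ (hψ s)]
  have hab := trajU_mono ψ hψ hAB
  rcases le_total (ψ s) (trajU ψ A) with h | h
  · rw [max_eq_right h, max_eq_right (h.trans hab)]; linarith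
  · rw [max_eq_left h]
    rcases le_total (ψ s) (trajU ψ B) with h2 | h2
    · rw [max_eq_right h2]; linarith
    · rw [max_eq_left h2]; linarith

lemma totalU_empty {T S : Type*} [Fintype T] (ψ : T → S → ℝ) :
    totalU ψ (∅ : Finset S) = 0 := by simp [totalU, trajU_empty]

lemma totalU_submod {T S : Type*} [Fintype T] [DecidableEq S] (ψ : T → S → ℝ)
    (hψ : ∀ j s, 0 ≤ ψ j s) {A B : Finset S} (hAB : A ⊆ B) (s : S) :
    totalU ψ (insert s B) - totalU ψ B ≤ totalU ψ (insert s A) - totalU ψ A := by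
  unfold totalU
  rw [← Finset.sum_sub_distrib, ← Finset.sum_sub_distrib]
  exact Finset.sum_le_sum fun j _ => trajU_submod (ψ j) (hψ j) hAB s

lemma sum_prefix_ge {a : ℕ → ℝ} {n k : ℕ} (hk : k ≤ n)
    (hmono : ∀ i j, i ≤ j → j < n → a j ≤ a i) :
    (k : ℝ) * ∑ i ∈ range n, a i ≤ (n : ℝ) * ∑ i ∈ range k, a i := by
  rcases eq_or_lt_of_le hk with rfl | hkn
  · exact le_refl _
  · have hsplit : ∑ i ∈ range k, a i + ∑ i ∈ Finset.Ico k n, a i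
        = ∑ i ∈ range n, a i := Finset.sum_range_add_sum_Ico a hk
    have hP : (k : ℝ) * a k ≤ ∑ i ∈ range k, a i := by
      have := Finset.card_nsmul_le_sum (range k) a (a k)
        (fun i hi => hmono i k (le_of_lt (Finset.mem_range.mp hi)) hkn)
      simpa [nsmul_eq_mul] using this
    have hR : ∑ i ∈ Finset.Ico k n, a i ≤ ((n : ℝ) - k) * a k := by
      have := Finset.sum_le_card_nsmul (Finset.Ico k n) a (a k)
        (fun i hi => hmono k i (Finset.mem_Ico.mp hi).1 (Finset.mem_Ico.mp hi).2)
      rw [Nat.card_Ico] at this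
      have hcast : ((n - k : ℕ) : ℝ) = (n : ℝ) - k := by
        push_cast [Nat.cast_sub hk]; ring
      simpa [nsmul_eq_mul, hcast] using this
    have h1 : (k : ℝ) * (∑ i ∈ Finset.Ico k n, a i) ≤ (k : ℝ) * (((n : ℝ) - k) * a k) :=
      mul_le_mul_of_nonneg_left hR (by positivity)
    have h2 : ((n : ℝ) - k) * ((k : ℝ) * a k) ≤ ((n : ℝ) - k) * ∑ i ∈ range k, a i :=
      mul_le_mul_of_nonneg_left hP (by
        have : (k : ℝ) ≤ n := by exact_mod_cast hk
        linarith)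
    nlinarith [hsplit]

/-- if `Q` is a greedy sequence for the total utility `U` that, continued for
`n = |S|` steps, exhausts `S`, then its length-`k` prefix satisfies `U(Q_k) ≥ (k/n)·U(S)`. -/
theorem greedy_prefix_totalU {T S : Type*} [Fintype T] [Fintype S] [DecidableEq S]
    (ψ : T → S → ℝ) (hψ : ∀ j s, 0 ≤ ψ j s ∧ ψ j s ≤ 1)
    (n k : ℕ) (hn : Fintype.card S = n) (hk : k ≤ n)
    (Q : ℕ → Finset S) (hgreedy : IsGreedySeq (totalU ψ) Q n)
    (hQn : Q n = Finset.univ) :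
    ((k : ℝ) / (n : ℝ)) * totalU ψ Finset.univ ≤ totalU ψ (Q k) := by
  obtain ⟨hQ0, hstep⟩ := hgreedy
  have hψ0 : ∀ j s, 0 ≤ ψ j s := fun j s => (hψ j s).1
  set f : Finset S → ℝ := totalU ψ with hf
  -- trivial case n = 0
  rcases Nat.eq_zero_or_pos n with rfl | hnpos
  · have hk0 : k = 0 := Nat.le_zero.mp hk
    subst hk0
    simp [hQ0, hf, totalU_empty]
  -- a i : gain at step i+1
  set a : ℕ → ℝ := fun i => f (Q (i + 1)) - f (Q i) with ha
  have hsubset : ∀ i, i + 1 ≤ n → Q i ⊆ Q (i + 1) := by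
    intro i hi
    obtain ⟨⟨s, _, hs⟩, _⟩ := hstep (i + 1) (Nat.le_add_left 1 i) hi
    simp only [Nat.add_sub_cancel] at hs
    rw [hs]
    exact Finset.subset_insert s (Q i)
  have htel : ∀ m, f (Q m) = ∑ i ∈ range m, a i := by
    intro m
    rw [Finset.sum_range_sub (fun i => f (Q i))]
    rw [hQ0, hf, totalU_empty]
    ring
  have hmono : ∀ i j, i ≤ j → j < n → a j ≤ a i := by
    have hadj : ∀ i, i + 1 < n → a (i + 1) ≤ a i := by
      intro i hi
      obtain ⟨⟨s, _, hs⟩, _⟩ := hstep (i + 2) (by omega) (by omega)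
      have hs' : Q (i + 2) = insert s (Q (i + 1)) := hs
      obtain ⟨_, hopt⟩ := hstep (i + 1) (Nat.le_add_left 1 i) (by omega)
      have hopt' : ∀ s : S, f (insert s (Q i)) ≤ f (Q (i + 1)) := by
        simpa using hopt
      have h1 : f (Q (i + 2)) - f (Q (i + 1)) ≤ f (insert s (Q i)) - f (Q i) := by
        rw [hs']
        exact totalU_submod ψ hψ0 (hsubset i (by omega)) s
      have h2 : f (insert s (Q i)) ≤ f (Q (i + 1)) := hopt' s
      show f (Q (i + 1 + 1)) - f (Q (i + 1)) ≤ f (Q (i + 1)) - f (Q i)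
      linarith
    intro i j hij hjn
    induction j with
    | zero =>
      have h0 : i = 0 := Nat.le_zero.mp hij
      rw [h0]
    | succ m ih =>
      rcases Nat.lt_or_ge i (m + 1) with h | h
      · exact le_trans (hadj m hjn) (ih (by omega) (by omega))
      · have : i = m + 1 := by omega
        rw [this]
  have hsum := sum_prefix_ge hk hmono
  rw [← htel k, ← htel n, hQn] at hsum
  rw [div_mul_eq_mul_div, div_le_iff₀ (by exact_mod_cast hnpos), mul_comm (f (Q k))]
  exact hsum
end

section
/- For every finite nonempty set P ⊆ V of trajectory nodes and all nodes c, c', r ∈ V, the detour distance satisfies d_r(P, r) ≤ d_r(P, c) + d_r(c, c') + d_r(c', r); that is, the round-trip distance estimate computed through the cluster centers c and c' is an upper bound on the true detour distance. -/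
open Finset

/-- Round-trip distance between two nodes with respect to a (quasi)metric `d`. -/
def roundTrip {V : Type*} (d : V → V → ℝ) (u v : V) : ℝ := d u v + d v u

/-- Detour distance from a trajectory (a finite nonempty set of nodes `P`) to a site `s`:
the minimum over pairs `(a,b) ∈ P × P` of `d(a,s) + d(s,b) − d(a,b)`. -/
noncomputable def detour {V : Type*} (d : V → V → ℝ) (P : Finset V) (hP : P.Nonempty)
    (s : V) : ℝ :=
  (P ×ˢ P).inf' (hP.product hP) fun p => d p.1 s + d s p.2 - d p.1 p.2

/-- the round-trip distance estimate through the cluster centers `c` and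
`c'` is an upper bound on the true detour distance:
`d_r(P, r) ≤ d_r(P, c) + d_r(c, c') + d_r(c', r)`. -/
theorem detour_le_estimate {V : Type*} (d : V → V → ℝ)
    (hnonneg : ∀ u v, 0 ≤ d u v) (hrefl : ∀ u, d u u = 0)
    (htri : ∀ u v w, d u w ≤ d u v + d v w)
    (P : Finset V) (hP : P.Nonempty) (c c' r : V) :
    detour d P hP r ≤ detour d P hP c + roundTrip d c c' + roundTrip d c' r := by
  obtain ⟨p, hpmem, hpeq⟩ := Finset.exists_mem_eq_inf' (hP.product hP)
    (fun p => d p.1 c + d c p.2 - d p.1 p.2)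
  have h1 : detour d P hP r ≤ d p.1 r + d r p.2 - d p.1 p.2 :=
    Finset.inf'_le _ hpmem
  have h2 : d p.1 r ≤ d p.1 c + d c c' + d c' r :=
    le_trans (htri _ c' _) (by linarith [htri p.1 c c'])
  have h3 : d r p.2 ≤ d r c' + d c' c + d c p.2 :=
    le_trans (htri _ c' _) (by linarith [htri c' c p.2])
  have : detour d P hP c = d p.1 c + d c p.2 - d p.1 p.2 := hpeq
  simp only [roundTrip]
  linarith
end

section
/- Let τ ≥ 0, let P ⊆ V be a finite nonempty set of trajectory nodes, and let c, c', r ∈ V. If the round-trip distance estimate d_r(P, c) + d_r(c, c') + d_r(c', r) is at most τ, then d_r(P, r) ≤ τ; consequently, every trajectory in the approximate trajectory cover of a cluster representative r belongs to its exact trajectory cover. -/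
open Finset

/-- if the round-trip distance estimate through the cluster centers is at
most `τ`, then the true detour distance is at most `τ`; hence every trajectory in the
approximate trajectory cover of a representative `r` is in its exact trajectory cover. -/
theorem approx_cover_subset_cover {V : Type*} (d : V → V → ℝ)
    (hnonneg : ∀ u v, 0 ≤ d u v) (hrefl : ∀ u, d u u = 0)
    (htri : ∀ u v w, d u w ≤ d u v + d v w)
    (τ : ℝ) (hτ : 0 ≤ τ)
    (P : Finset V) (hP : P.Nonempty) (c c' r : V)
    (hest : detour d P hP c + roundTrip d c c' + roundTrip d c' r ≤ τ) :
    detour d P hP r ≤ τ := by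
  obtain ⟨⟨a, b⟩, hab, hmin⟩ := Finset.exists_mem_eq_inf' (hP.product hP)
    (fun p => d p.1 c + d c p.2 - d p.1 p.2)
  have key : d a r + d r b - d a b ≤
      (d a c + d c b - d a b) + roundTrip d c c' + roundTrip d c' r := by
    have h1 : d a r ≤ d a c + d c c' + d c' r :=
      le_trans (htri a c' r) (by linarith [htri a c c'])
    have h2 : d r b ≤ d r c' + d c' c + d c b :=
      le_trans (htri r c b) (by linarith [htri r c' c])
    simp only [roundTrip]; linarith
  calc detour d P hP r ≤ d a r + d r b - d a b :=
        Finset.inf'_le _ hab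
    _ ≤ (d a c + d c b - d a b) + roundTrip d c c' + roundTrip d c' r := key
    _ ≤ τ := by simp only [detour] at hest; rw [hmin] at hest; exact hest
end
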